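/- Let D be the dihedral group of order 2q with q odd, G its cyclic subgroup of order q, Σ = ⟨σ⟩, Σ' = ⟨σρ⟩ subgroups of order 2. For any D-module B, one has the equalities B^Σ + B^Σ' = B^Σ + I_G·B = B^Σ' + I_G·B. -/

import Mathlib

open DihedralGroup

/-- The subgroup of points fixed by a subgroup `H` of the dihedral group. -/
def fixedBy {q : ℕ} (H : Subgroup (DihedralGroup q)) (B : Type*) [AddCommGroup B]
    [DistribMulAction (DihedralGroup q) B] : AddSubgroup B where
  carrier := {b | ∀ h ∈ H, h • b = b}
  zero_mem' := fun h _ => smul_zero h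
  add_mem' := by intro a b ha hb h hh; rw [smul_add, ha h hh, hb h hh]
  neg_mem' := by intro a ha h hh; rw [smul_neg, ha h hh]

/-- `I_G·B = (1-ρ)B`, the augmentation submodule for the rotation subgroup `G = ⟨ρ⟩`. -/
def augG (q : ℕ) (B : Type*) [AddCommGroup B]
    [DistribMulAction (DihedralGroup q) B] : AddSubgroup B :=
  AddMonoidHom.range
    { toFun := fun b => b - (r 1 : DihedralGroup q) • b
      map_zero' := by simp
      map_add' := by intro x y; simp only [smul_add]; abel }

section Aux

variable {q : ℕ} {B : Type*} [AddCommGroup B] [DistribMulAction (DihedralGroup q) B]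

lemma mem_fixedBy_closure_singleton {g : DihedralGroup q} {b : B} :
    b ∈ fixedBy (Subgroup.closure {g}) B ↔ g • b = b := by
  constructor
  · intro h
    exact h g (Subgroup.subset_closure (Set.mem_singleton g))
  · intro hb h hh
    induction hh using Subgroup.closure_induction with
    | mem x hx => rwa [Set.mem_singleton_iff.mp hx]
    | one => exact one_smul _ _
    | mul x y hx hy ihx ihy => rw [mul_smul, ihy, ihx]
    | inv x hx ihx => rw [← ihx, inv_smul_smul, ihx]

lemma sub_smul_mem_augG (b : B) : b - (r 1 : DihedralGroup q) • b ∈ augG q B :=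
  ⟨b, rfl⟩

lemma pow_smul_sub_mem_augG (k : ℕ) (b : B) :
    (r 1 : DihedralGroup q) ^ k • b - b ∈ augG q B := by
  induction k with
  | zero => simpa using (augG q B).zero_mem
  | succ n ih =>
      have h1 : (r 1 : DihedralGroup q) ^ (n + 1) • b - b =
          -(((r 1 : DihedralGroup q) ^ n • b) - (r 1 : DihedralGroup q) •
            ((r 1 : DihedralGroup q) ^ n • b)) + ((r 1 : DihedralGroup q) ^ n • b - b) := by
        rw [pow_succ', mul_smul]; abel
      rw [h1]
      exact (augG q B).add_mem ((augG q B).neg_mem (sub_smul_mem_augG _)) ih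

end Aux

/-- For the dihedral group `D` of order `2q` (`q` odd) with subgroups
`G = ⟨ρ⟩`, `Σ = ⟨σ⟩`, `Σ' = ⟨σρ⟩`, and any `D`-module `B`:
`B^Σ + B^Σ' = B^Σ + I_G·B = B^Σ' + I_G·B`. -/
theorem fixed_sup_fixed_eq_fixed_sup_aug (q : ℕ) [NeZero q] (hq : Odd q)
    (B : Type*) [AddCommGroup B] [DistribMulAction (DihedralGroup q) B] :
    fixedBy (Subgroup.closure {(sr 0 : DihedralGroup q)}) B ⊔
        fixedBy (Subgroup.closure {(sr 0 * r 1 : DihedralGroup q)}) B =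
      fixedBy (Subgroup.closure {(sr 0 : DihedralGroup q)}) B ⊔ augG q B ∧
    fixedBy (Subgroup.closure {(sr 0 : DihedralGroup q)}) B ⊔
        fixedBy (Subgroup.closure {(sr 0 * r 1 : DihedralGroup q)}) B =
      fixedBy (Subgroup.closure {(sr 0 * r 1 : DihedralGroup q)}) B ⊔ augG q B := by
  -- notation
  set σ : DihedralGroup q := sr 0 with hσ
  set σ' : DihedralGroup q := sr 0 * r 1 with hσ'
  have hσ'1 : σ' = sr 1 := by
    rw [hσ']; simp [sr_mul_r]
  obtain ⟨m, hm⟩ := hq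
  -- m is the "half" exponent: 2m ≡ -1 (mod q)
  have hm2 : ((m : ZMod q) + (m : ZMod q)) = -1 := by
    have : ((2 * m + 1 : ℕ) : ZMod q) = 0 := by rw [← hm]; exact ZMod.natCast_self q
    push_cast at this
    linear_combination this
  set g : DihedralGroup q := (r 1 : DihedralGroup q) ^ m with hg
  have hgr : g = r (m : ZMod q) := by rw [hg, r_one_pow]
  -- g maps B^Σ into B^Σ' and its inverse maps B^Σ' into B^Σ
  have hcomm : σ' * g = g * σ := by
    rw [hσ'1, hgr, hσ, sr_mul_r, r_mul_sr]
    congr 1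
    linear_combination hm2
  have key1 : ∀ b : B, σ • b = b → σ' • (g • b) = g • b := by
    intro b hb
    rw [← mul_smul, hcomm, mul_smul, hb]
  have key2 : ∀ b : B, σ' • b = b → σ • (g⁻¹ • b) = g⁻¹ • b := by
    intro b hb
    have hc2 : σ * g⁻¹ = g⁻¹ * σ' := by
      calc σ * g⁻¹ = g⁻¹ * (g * σ) * g⁻¹ := by group
        _ = g⁻¹ * (σ' * g) * g⁻¹ := by rw [hcomm]
        _ = g⁻¹ * σ' := by group
    rw [← mul_smul, hc2, mul_smul, hb]
  -- the three inclusions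
  have hALB : augG q B ≤
      fixedBy (Subgroup.closure {σ}) B ⊔ fixedBy (Subgroup.closure {σ'}) B := by
    rintro x ⟨b, rfl⟩
    have hσσ' : σ • (σ' • b) = (r 1 : DihedralGroup q) • b := by
      rw [← mul_smul, hσ, hσ'1, sr_mul_sr]
      norm_num
    have hdec : b - (r 1 : DihedralGroup q) • b =
        -(σ • (σ' • b) + σ' • b) + (σ' • b + b) := by
      rw [hσσ']; abel
    simp only [AddMonoidHom.coe_mk, ZeroHom.coe_mk]
    rw [hdec]
    refine AddSubgroup.add_mem _ (AddSubgroup.neg_mem _ ?_) ?_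
    · apply AddSubgroup.mem_sup_left
      rw [mem_fixedBy_closure_singleton]
      have hσ2 : σ * σ = 1 := by rw [hσ, sr_mul_sr]; simp
      rw [smul_add, smul_smul, hσ2, one_smul]
      abel
    · apply AddSubgroup.mem_sup_right
      rw [mem_fixedBy_closure_singleton]
      have hσ'2 : σ' * σ' = 1 := by rw [hσ'1, sr_mul_sr]; simp
      rw [smul_add, smul_smul, hσ'2, one_smul]
      abel
  have hS1L : fixedBy (Subgroup.closure {σ'}) B ≤
      fixedBy (Subgroup.closure {σ}) B ⊔ augG q B := by
    intro b hb
    rw [mem_fixedBy_closure_singleton] at hb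
    have hfix : σ • (g⁻¹ • b) = g⁻¹ • b := key2 b hb
    have hdec : b = g⁻¹ • b + (g • (g⁻¹ • b) - g⁻¹ • b) := by
      rw [smul_inv_smul]; abel
    rw [hdec]
    refine AddSubgroup.add_mem _ ?_ ?_
    · exact AddSubgroup.mem_sup_left (mem_fixedBy_closure_singleton.mpr hfix)
    · exact AddSubgroup.mem_sup_right (by rw [hg]; exact pow_smul_sub_mem_augG m _)
  have hSL : fixedBy (Subgroup.closure {σ}) B ≤
      fixedBy (Subgroup.closure {σ'}) B ⊔ augG q B := by
    intro b hb
    rw [mem_fixedBy_closure_singleton] at hb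
    have hfix : σ' • (g • b) = g • b := key1 b hb
    have hdec : b = g • b + -(g • b - b) := by abel
    rw [hdec]
    refine AddSubgroup.add_mem _ ?_ (AddSubgroup.neg_mem _ ?_)
    · exact AddSubgroup.mem_sup_left (mem_fixedBy_closure_singleton.mpr hfix)
    · exact AddSubgroup.mem_sup_right (by rw [hg]; exact pow_smul_sub_mem_augG m b)
  constructor
  · exact le_antisymm (sup_le le_sup_left hS1L) (sup_le le_sup_left hALB)
  · exact le_antisymm (sup_le hSL le_sup_left) (sup_le le_sup_right hALB)
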